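/- arXiv:2404.17275 — 4 statements merged into one kernel-verified Lean document; each statement's English description precedes it below -/
import Mathlib

section
/- Combining the mixture-mass inequality with the robustness-mass bound: under the assumptions (a) $Q(y=i) \leq r\,P(y=i)$ for all classes $i$; (b) every class $i \in S_2$ has robustness failure rate at least $c = \min\{\epsilon, q\} > 0$ on the mixture $\mu = \frac{1}{2}(P+Q)$; and (c) $R_\mu(f) = \sum_i r_i \, \mu(y=i)$ is the total robustness failure of $f$ on $\mu$ (with $r_i$ the failure rate of class $i$), we have $\sum_{i \in S_2} Q(y=i) \leq \frac{2r}{c(1+r)} R_\mu(f)$. -/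
/-- Combining the mixture-mass inequality with the robustness-mass bound:
`∑_{i ∈ S₂} Q(y=i) ≤ (2r / (c(1+r))) · R_μ(f)` where `c = min{ε, q}`. -/
theorem mixture_robustness_bound {Y : Type*} [Fintype Y] [DecidableEq Y]
    (P Q μ rfail : Y → ℝ) (S₂ : Finset Y)
    (r ε q : ℝ) (hr : 0 < r) (hε : 0 < ε) (hq : 0 < q)
    (hP0 : ∀ i, 0 ≤ P i) (hQ0 : ∀ i, 0 ≤ Q i)
    (hμ : ∀ i, μ i = (P i + Q i) / 2)
    (hratio : ∀ i, Q i ≤ r * P i)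
    (hrfail : ∀ i, 0 ≤ rfail i ∧ rfail i ≤ 1)
    (hS₂ : ∀ i ∈ S₂, min ε q ≤ rfail i)
    (Rμ : ℝ) (hRμ : Rμ = ∑ i, rfail i * μ i) :
    ∑ i ∈ S₂, Q i ≤ 2 * r / (min ε q * (1 + r)) * Rμ := by
  set c := min ε q with hc
  have hc0 : 0 < c := lt_min hε hq
  have h1r : 0 < 1 + r := by linarith
  have hμ0 : ∀ i, 0 ≤ μ i := fun i => by
    rw [hμ i]; have := hP0 i; have := hQ0 i; linarith
  -- key pointwise bound: c * ((1+r)/(2*r)) * Q i ≤ rfail i * μ i for i ∈ S₂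
  have key : ∀ i ∈ S₂, c * ((1 + r) / (2 * r)) * Q i ≤ rfail i * μ i := by
    intro i hi
    have hμge : (1 + r) / (2 * r) * Q i ≤ μ i := by
      rw [hμ i, div_mul_eq_mul_div, div_le_div_iff₀ (by positivity) two_pos]
      have hQP : Q i ≤ r * P i := hratio i
      nlinarith [hQ0 i, hP0 i]
    calc c * ((1 + r) / (2 * r)) * Q i ≤ c * μ i := by
          rw [mul_assoc]; exact mul_le_mul_of_nonneg_left hμge hc0.le
      _ ≤ rfail i * μ i := mul_le_mul_of_nonneg_right (hS₂ i hi) (hμ0 i)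
  have hsum : c * ((1 + r) / (2 * r)) * ∑ i ∈ S₂, Q i ≤ Rμ := by
    rw [hRμ, Finset.mul_sum]
    calc (∑ i ∈ S₂, c * ((1 + r) / (2 * r)) * Q i)
        ≤ ∑ i ∈ S₂, rfail i * μ i := Finset.sum_le_sum key
      _ ≤ ∑ i, rfail i * μ i :=
          Finset.sum_le_sum_of_subset_of_nonneg (Finset.subset_univ S₂)
            (fun i _ _ => mul_nonneg (hrfail i).1 (hμ0 i))
  have hpos : 0 < c * ((1 + r) / (2 * r)) := by positivity
  have : (∑ i ∈ S₂, Q i) ≤ Rμ / (c * ((1 + r) / (2 * r))) :=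
    (le_div_iff₀ hpos).mpr (by linarith)
  calc ∑ i ∈ S₂, Q i ≤ Rμ / (c * ((1 + r) / (2 * r))) := this
    _ = 2 * r / (c * (1 + r)) * Rμ := by
        field_simp
end

section
/- Abstract form of Lemma A.3: let $f : \mathcal{X} \to [0,1]^k$ be $L$-Lipschitz with respect to a metric $d$, let $\xi > 0$ with $2L\xi < 1$, and define the margin $M(f(x)) = f(x)_{i^*} - \max_{i \neq i^*} f(x)_i$ where $i^* = \arg\max_i f(x)_i$. If $x' \in \mathcal{X}$ satisfies $d(x, x') \leq \xi$ and the argmax predictions differ, $\tilde f(x) \neq \tilde f(x')$, then $M(f(x)) \leq 2L\xi$. Consequently, $\mathbb{I}(\exists x' \in \mathcal{N}(x): \tilde f(x) \neq \tilde f(x')) \leq \frac{1 - M(f(x))}{1 - 2L\xi}$ pointwise. -/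
open Finset

/-- Abstract form of Lemma A.3 (pointwise): if `f : X → [0,1]^k` is
`L`-Lipschitz, `2Lξ < 1`, and some `x'` within distance `ξ` of `x` has a
different argmax prediction, then the margin at `x` is at most `2Lξ`;
consequently the indicator of local-robustness failure is bounded pointwise
by `(1 - M(f(x)))/(1 - 2Lξ)`. -/
theorem margin_pointwise_bound {X : Type*} [MetricSpace X] {k : ℕ} (hk : 2 ≤ k)
    (f : X → Fin k → ℝ) (hf01 : ∀ x i, f x i ∈ Set.Icc (0 : ℝ) 1)
    (L ξ : ℝ) (hL : 0 ≤ L) (hξ : 0 < ξ) (hLξ : 2 * L * ξ < 1)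
    (hLip : ∀ x x' i, |f x i - f x' i| ≤ L * dist x x')
    (tf : X → Fin k) (htf : ∀ x i, f x i ≤ f x (tf x))
    (hne : ∀ x, (Finset.univ.erase (tf x)).Nonempty)
    (M : X → ℝ)
    (hM : ∀ x, M x = f x (tf x) - (Finset.univ.erase (tf x)).sup' (hne x) (f x)) :
    (∀ x x', dist x x' ≤ ξ → tf x ≠ tf x' → M x ≤ 2 * L * ξ) ∧
    ∀ x, Set.indicator {y : X | ∃ y', dist y y' ≤ ξ ∧ tf y ≠ tf y'} 1 x ≤
      (1 - M x) / (1 - 2 * L * ξ) := by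
  have key : ∀ x x', dist x x' ≤ ξ → tf x ≠ tf x' → M x ≤ 2 * L * ξ := by
    intro x x' hd hne'
    have hmem : tf x' ∈ Finset.univ.erase (tf x) :=
      Finset.mem_erase.2 ⟨fun h => hne' h.symm, Finset.mem_univ _⟩
    have hsup : f x (tf x') ≤ (Finset.univ.erase (tf x)).sup' (hne x) (f x) :=
      Finset.le_sup' (f x) hmem
    have h1 : f x (tf x) - f x' (tf x) ≤ L * dist x x' :=
      le_trans (le_abs_self _) (hLip x x' _)
    have h2 : f x' (tf x') - f x (tf x') ≤ L * dist x' x :=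
      le_trans (le_abs_self _) (hLip x' x _)
    have h3 : f x' (tf x) ≤ f x' (tf x') := htf x' _
    have hLd : L * dist x x' ≤ L * ξ := mul_le_mul_of_nonneg_left hd hL
    rw [hM x]
    have : dist x' x = dist x x' := dist_comm x' x
    nlinarith [hsup]
  refine ⟨key, fun x => ?_⟩
  have hden : 0 < 1 - 2 * L * ξ := by linarith
  have hM1 : M x ≤ 1 := by
    rw [hM x]
    obtain ⟨j, hj⟩ := hne x
    have : (0:ℝ) ≤ (Finset.univ.erase (tf x)).sup' (hne x) (f x) :=
      le_trans (hf01 x j).1 (Finset.le_sup' (f x) hj)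
    have := (hf01 x (tf x)).2
    linarith
  by_cases hx : x ∈ {y : X | ∃ y', dist y y' ≤ ξ ∧ tf y ≠ tf y'}
  · rw [Set.indicator_of_mem hx]
    obtain ⟨y', hd, hne'⟩ := hx
    have := key x y' hd hne'
    rw [Pi.one_apply, le_div_iff₀ hden]
    linarith
  · rw [Set.indicator_of_notMem hx]
    apply div_nonneg (by linarith) hden.le
end

section
/- Lemma A.3: Let $f : \mathcal{X} \to [0,1]^k$ be $L$-Lipschitz w.r.t. a metric $d$, with $2L\xi < 1$. For any probability distribution $P$ on $\mathcal{X}$, the robustness failure $R_P(f) = P(\{x : \exists x' \text{ with } d(x,x') \leq \xi \text{ and } \tilde f(x) \neq \tilde f(x')\})$ satisfies $R_P(f) \leq \frac{1}{1 - 2L\xi}\bigl(1 - M_P(f)\bigr)$, where $M_P(f) = \mathbb{E}_{x \sim P}\,M(f(x))$ is the expected margin. -/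
open Finset MeasureTheory

/-- Lemma A.3: for an `L`-Lipschitz classifier `f : X → [0,1]^k` with
`2Lξ < 1` and any probability distribution `P`, the robustness failure
probability is at most `(1 - M_P(f)) / (1 - 2Lξ)`, where `M_P(f)` is the
expected margin under `P`. -/
theorem robustness_le_margin {X : Type*} [MetricSpace X] [MeasurableSpace X]
    [OpensMeasurableSpace X] {k : ℕ} (hk : 2 ≤ k)
    (f : X → Fin k → ℝ) (hf01 : ∀ x i, f x i ∈ Set.Icc (0 : ℝ) 1)
    (L ξ : ℝ) (hL : 0 ≤ L) (hξ : 0 < ξ) (hLξ : 2 * L * ξ < 1)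
    (hLip : ∀ x x' i, |f x i - f x' i| ≤ L * dist x x')
    (tf : X → Fin k) (htf : ∀ x i, f x i ≤ f x (tf x))
    (hne : ∀ x, (Finset.univ.erase (tf x)).Nonempty)
    (M : X → ℝ)
    (hM : ∀ x, M x = f x (tf x) - (Finset.univ.erase (tf x)).sup' (hne x) (f x))
    (P : Measure X) [IsProbabilityMeasure P]
    (hMint : Integrable M P)
    (hmeas : MeasurableSet {x : X | ∃ x', dist x x' ≤ ξ ∧ tf x ≠ tf x'}) :
    (P {x : X | ∃ x', dist x x' ≤ ξ ∧ tf x ≠ tf x'}).toReal ≤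
      (1 - ∫ x, M x ∂P) / (1 - 2 * L * ξ) := by
  set S := {x : X | ∃ x', dist x x' ≤ ξ ∧ tf x ≠ tf x'} with hS
  have hden : 0 < 1 - 2 * L * ξ := by linarith
  -- M x ≤ 1 everywhere
  have hM1 : ∀ x, M x ≤ 1 := by
    intro x
    rw [hM x]
    have h1 : f x (tf x) ≤ 1 := (hf01 x (tf x)).2
    obtain ⟨i, hi⟩ := hne x
    have h2 : (0 : ℝ) ≤ (Finset.univ.erase (tf x)).sup' (hne x) (f x) :=
      le_trans (hf01 x i).1 (Finset.le_sup' (f x) hi)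
    linarith
  -- on S, M x ≤ 2Lξ
  have hMS : ∀ x ∈ S, M x ≤ 2 * L * ξ := by
    rintro x ⟨x', hd, hne'⟩
    have h1 : f x (tf x') ≥ f x' (tf x') - L * ξ := by
      have := abs_le.1 (hLip x x' (tf x'))
      have hLd : L * dist x x' ≤ L * ξ := mul_le_mul_of_nonneg_left hd hL
      linarith [this.1]
    have h2 : f x' (tf x) ≥ f x (tf x) - L * ξ := by
      have := abs_le.1 (hLip x x' (tf x))
      have hLd : L * dist x x' ≤ L * ξ := mul_le_mul_of_nonneg_left hd hL
      linarith [this.2]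
    have h3 : f x' (tf x) ≤ f x' (tf x') := htf x' (tf x)
    have hmem : tf x' ∈ Finset.univ.erase (tf x) :=
      Finset.mem_erase.2 ⟨fun h => hne' h.symm, Finset.mem_univ _⟩
    have h4 : f x (tf x') ≤ (Finset.univ.erase (tf x)).sup' (hne x) (f x) :=
      Finset.le_sup' (f x) hmem
    rw [hM x]; linarith
  have hint1 : Integrable (fun x => 1 - M x) P := (integrable_const 1).sub hMint
  have key : (1 - 2 * L * ξ) * (P S).toReal ≤ 1 - ∫ x, M x ∂P := by
    have e1 : (1 - 2 * L * ξ) * (P S).toReal = ∫ _ in S, (1 - 2 * L * ξ) ∂P := by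
      rw [setIntegral_const, smul_eq_mul, mul_comm]; rfl
    have e2 : ∫ _ in S, (1 - 2 * L * ξ) ∂P ≤ ∫ x in S, (1 - M x) ∂P := by
      apply setIntegral_mono_on (integrable_const _).integrableOn
        hint1.integrableOn hmeas
      intro x hx
      have := hMS x hx
      linarith
    have e3 : ∫ x in S, (1 - M x) ∂P ≤ ∫ x, (1 - M x) ∂P := by
      apply setIntegral_le_integral hint1
      filter_upwards with x
      have := hM1 x
      simp only [Pi.zero_apply]
      linarith
    have e4 : ∫ x, (1 - M x) ∂P = 1 - ∫ x, M x ∂P := by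
      rw [integral_sub (integrable_const 1) hMint, integral_const]
      simp
    linarith
  rw [le_div_iff₀ hden]
  linarith
end

section
/- Closed-form structure of the reweighting linear program: fix $d \in \mathbb{R}^m$ and consider minimizing $d^T w$ over $\mathcal{W}' = \{w : w_i \geq 0, \sum_i w_i = m, \sum_i (w_i-1)^2 \leq \rho m\}$. If $d$ is not a constant vector and the minimizer $w^*$ is interior to the nonnegativity constraints (all $w^*_i > 0$), then $w^*_i = 1 - \frac{\sqrt{\rho m}\,(d_i - \bar d)}{\|d - \bar d \mathbf{1}\|_2}$ where $\bar d = \frac{1}{m}\sum_i d_i$; in particular, samples with smaller discriminator output $d_i$ receive larger weight $w^*_i$. -/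
open Finset

set_option maxHeartbeats 2000000 in
/-- Closed-form structure of the reweighting linear program: if `d` is not
constant and the minimizer `w*` of `d ᵀ w` over
`𝒲' = {w : w ≥ 0, ∑ w = m, ∑ (w-1)² ≤ ρm}` has all coordinates positive, then
`w*_i = 1 - √(ρm) (d_i - d̄) / ‖d - d̄ 1‖₂`; in particular smaller
discriminator outputs receive larger weights. -/
theorem reweighting_lp_closed_form (m : ℕ) (hm : 1 ≤ m) (ρ : ℝ) (hρ : 0 < ρ)
    (d w : Fin m → ℝ)
    (hd : ∃ i j, d i ≠ d j)
    (hw : (∀ i, 0 ≤ w i) ∧ ∑ i, w i = m ∧ ∑ i, (w i - 1) ^ 2 ≤ ρ * m)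
    (hpos : ∀ i, 0 < w i)
    (hmin : ∀ v : Fin m → ℝ, ((∀ i, 0 ≤ v i) ∧ ∑ i, v i = m ∧
        ∑ i, (v i - 1) ^ 2 ≤ ρ * m) → ∑ i, d i * w i ≤ ∑ i, d i * v i) :
    (∀ i, w i = 1 - Real.sqrt (ρ * m) * (d i - (∑ j, d j) / m) /
        Real.sqrt (∑ j, (d j - (∑ j', d j') / m) ^ 2)) ∧
    ∀ i j, d i < d j → w j < w i := by
  obtain ⟨hw0, hwsum, hwq⟩ := hw
  have hm0 : (0:ℝ) < m := by exact_mod_cast Nat.lt_of_lt_of_le Nat.zero_lt_one hm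
  set db : ℝ := (∑ j, d j) / m with hdb
  set e : Fin m → ℝ := fun i => d i - db with he
  have hcard : ∑ _i : Fin m, (1:ℝ) = m := by simp
  have hesum : ∑ i, e i = 0 := by
    have : ∑ i, e i = (∑ i, d i) - ∑ _i : Fin m, db := by
      simp [he, Finset.sum_sub_distrib]
    rw [this]
    have : ∑ _i : Fin m, db = (m : ℝ) * db := by simp [mul_comm]
    rw [this, hdb]
    field_simp
    ring
  set S2 : ℝ := ∑ j, e j ^ 2 with hS2
  have hS2pos : 0 < S2 := by
    rcases hd with ⟨i, j, hij⟩
    rcases (Finset.sum_nonneg (fun k _ => sq_nonneg (e k)) : (0:ℝ) ≤ S2).lt_or_eq with h | h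
    · exact h
    · exfalso
      have hz : ∀ k ∈ (univ : Finset (Fin m)), e k ^ 2 = 0 :=
        (Finset.sum_eq_zero_iff_of_nonneg (fun k _ => sq_nonneg (e k))).mp h.symm
      have hdi : d i = db := by
        have := hz i (mem_univ i); have := pow_eq_zero_iff (n := 2) (by norm_num) |>.mp this
        simpa [he, sub_eq_zero] using this
      have hdj : d j = db := by
        have := hz j (mem_univ j); have := pow_eq_zero_iff (n := 2) (by norm_num) |>.mp this
        simpa [he, sub_eq_zero] using this
      exact hij (hdi.trans hdj.symm)
  set S : ℝ := Real.sqrt S2 with hS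
  have hSpos : 0 < S := Real.sqrt_pos.mpr hS2pos
  have hSsq : S ^ 2 = S2 := Real.sq_sqrt hS2pos.le
  have hρm : 0 < ρ * m := mul_pos hρ hm0
  set r : ℝ := Real.sqrt (ρ * m) with hr
  have hrpos : 0 < r := Real.sqrt_pos.mpr hρm
  have hrsq : r ^ 2 = ρ * m := Real.sq_sqrt hρm.le
  clear_value db e S2 S r
  -- extended minimality over the relaxed feasible set (dropping nonnegativity)
  have hext : ∀ v : Fin m → ℝ, ∑ i, v i = m → ∑ i, (v i - 1) ^ 2 ≤ ρ * m →
      ∑ i, d i * w i ≤ ∑ i, d i * v i := by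
    intro v hv1 hv2
    have hne : (univ : Finset (Fin m)).Nonempty := ⟨⟨0, hm⟩, mem_univ _⟩
    obtain ⟨i0, _, hi0⟩ := Finset.exists_min_image univ w hne
    have hε : 0 < w i0 := hpos i0
    obtain ⟨i1, _, hi1⟩ := Finset.exists_max_image univ (fun i => |v i - w i|) hne
    set M : ℝ := |v i1 - w i1| + 1 with hMdef
    have hM : 0 < M := by positivity
    set t : ℝ := min 1 (w i0 / M) with htdef
    have ht0 : 0 < t := lt_min one_pos (div_pos hε hM)
    have ht1 : t ≤ 1 := min_le_left _ _
    have htM : t * M ≤ w i0 := by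
      have : t ≤ w i0 / M := min_le_right _ _
      calc t * M ≤ (w i0 / M) * M := by nlinarith
        _ = w i0 := by field_simp
    set v' : Fin m → ℝ := fun i => w i + t * (v i - w i) with hv'
    clear_value M t v'
    have habs : ∀ i, |v i - w i| ≤ M := by
      intro i
      have := hi1 i (mem_univ i)
      simp only [hMdef]; linarith
    have hv'0 : ∀ i, 0 ≤ v' i := by
      intro i
      have h1 : t * (v i - w i) ≥ -(t * M) := by
        have := habs i
        have h2 : -(M) ≤ v i - w i := by
          have h3 := neg_abs_le (v i - w i)
          linarith [habs i]
        nlinarith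
      have h3 : w i0 ≤ w i := hi0 i (mem_univ i)
      simp only [hv']
      linarith
    have hv'sum : ∑ i, v' i = m := by
      simp only [hv']
      rw [Finset.sum_add_distrib, ← Finset.mul_sum, Finset.sum_sub_distrib, hwsum, hv1]
      ring
    have hv'q : ∑ i, (v' i - 1) ^ 2 ≤ ρ * m := by
      have hpt : ∀ i ∈ (univ : Finset (Fin m)), (v' i - 1) ^ 2 ≤
          (1 - t) * (w i - 1) ^ 2 + t * (v i - 1) ^ 2 := by
        intro i _
        simp only [hv']
        nlinarith [mul_nonneg (mul_nonneg ht0.le (sub_nonneg.mpr ht1)) (sq_nonneg (w i - v i))]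
      calc ∑ i, (v' i - 1) ^ 2
          ≤ ∑ i, ((1 - t) * (w i - 1) ^ 2 + t * (v i - 1) ^ 2) := Finset.sum_le_sum hpt
        _ = (1 - t) * (∑ i, (w i - 1) ^ 2) + t * ∑ i, (v i - 1) ^ 2 := by
            rw [Finset.sum_add_distrib, ← Finset.mul_sum, ← Finset.mul_sum]
        _ ≤ (1 - t) * (ρ * m) + t * (ρ * m) := by
            have h1 : (0:ℝ) ≤ 1 - t := by linarith
            exact add_le_add (mul_le_mul_of_nonneg_left hwq h1)
              (mul_le_mul_of_nonneg_left hv2 ht0.le)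
        _ = ρ * m := by ring
    have hle := hmin v' ⟨hv'0, hv'sum, hv'q⟩
    have hdv' : ∑ i, d i * v' i =
        ∑ i, d i * w i + t * (∑ i, d i * v i - ∑ i, d i * w i) := by
      simp only [hv']
      have h1 : ∀ i ∈ (univ : Finset (Fin m)), d i * (w i + t * (v i - w i))
          = d i * w i + (t * (d i * v i) - t * (d i * w i)) := by
        intro i _; ring
      rw [Finset.sum_congr rfl h1, Finset.sum_add_distrib, Finset.sum_sub_distrib,
        ← Finset.mul_sum, ← Finset.mul_sum]
      ring
    rw [hdv'] at hle
    have h2 : 0 ≤ t * (∑ i, d i * v i - ∑ i, d i * w i) := by linarith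
    have h3 : 0 ≤ ∑ i, d i * v i - ∑ i, d i * w i :=
      nonneg_of_mul_nonneg_right h2 ht0
    linarith
  -- the candidate optimum
  have hde : ∑ i, d i * e i = S2 := by
    have : ∀ i ∈ (univ : Finset (Fin m)), d i * e i = e i ^ 2 + db * e i := by
      intro i _; simp only [he]; ring
    rw [Finset.sum_congr rfl this, Finset.sum_add_distrib, ← Finset.mul_sum, hesum]
    simp [hS2]
  have hwstsum : ∑ i, (1 - r * e i / S) = (m : ℝ) := by
    rw [Finset.sum_sub_distrib, hcard]
    have : ∑ i, r * e i / S = r / S * ∑ i, e i := by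
      rw [Finset.mul_sum]; apply Finset.sum_congr rfl; intro i _; ring
    rw [this, hesum]; ring
  have hwstq : ∑ i, ((1 - r * e i / S) - 1) ^ 2 ≤ ρ * m := by
    have : ∀ i ∈ (univ : Finset (Fin m)), ((1 - r * e i / S) - 1) ^ 2
        = (r ^ 2 / S ^ 2) * e i ^ 2 := by
      intro i _; ring
    rw [Finset.sum_congr rfl this, ← Finset.mul_sum, ← hS2, hSsq, hrsq]
    rw [div_mul_eq_mul_div, mul_div_assoc, div_self hS2pos.ne']
    simp
  have hdwst : ∑ i, d i * (1 - r * e i / S) = (m : ℝ) * db - r * S := by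
    have h1 : ∀ i ∈ (univ : Finset (Fin m)), d i * (1 - r * e i / S)
        = d i - (r / S) * (d i * e i) := by
      intro i _; ring
    rw [Finset.sum_congr rfl h1, Finset.sum_sub_distrib, ← Finset.mul_sum, hde]
    have h2 : ∑ i, d i = (m : ℝ) * db := by
      rw [hdb, mul_div_assoc', mul_comm, mul_div_assoc, div_self hm0.ne', mul_one]
    rw [h2]
    have h3 : r / S * S2 = r * S := by
      rw [← hSsq, pow_two, div_mul_eq_mul_div, mul_div_assoc, mul_div_assoc,
        div_self hSpos.ne', mul_one]
    rw [h3]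
  have hub : ∑ i, d i * w i ≤ (m : ℝ) * db - r * S := by
    have := hext (fun i => 1 - r * e i / S) hwstsum hwstq
    rwa [hdwst] at this
  -- rewrite objective via centered d
  set A : ℝ := ∑ i, e i * (w i - 1) with hAdef
  have hWA : ∑ i, d i * w i = (m : ℝ) * db + A := by
    have h1 : ∀ i ∈ (univ : Finset (Fin m)), d i * w i
        = e i * (w i - 1) + e i + db * w i := by
      intro i _; simp only [he]; ring
    rw [Finset.sum_congr rfl h1, Finset.sum_add_distrib, Finset.sum_add_distrib,
      hesum, ← Finset.mul_sum, hwsum]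
    ring
  have hAub : A ≤ -(r * S) := by
    rw [hWA] at hub; linarith
  have hCS : A ^ 2 ≤ S2 * ∑ i, (w i - 1) ^ 2 := by
    have := Finset.sum_mul_sq_le_sq_mul_sq univ e (fun i => w i - 1)
    simpa [hAdef, hS2] using this
  have hA2 : A ^ 2 ≤ S2 * (ρ * m) := by
    calc A ^ 2 ≤ S2 * ∑ i, (w i - 1) ^ 2 := hCS
      _ ≤ S2 * (ρ * m) := by nlinarith
  have hrS2 : (r * S) ^ 2 = S2 * (ρ * m) := by
    rw [mul_pow, hrsq, hSsq]; ring
  have hAeq : A = -(r * S) := by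
    by_contra hne
    have hlt : A < -(r * S) := lt_of_le_of_ne hAub hne
    have hrS : 0 < r * S := mul_pos hrpos hSpos
    nlinarith [mul_pos (show (0:ℝ) < -(A + r * S) by linarith)
      (show (0:ℝ) < r * S - A by linarith)]
  have hQeq : ∑ i, (w i - 1) ^ 2 = ρ * m := by
    have h1 : A ^ 2 = S2 * (ρ * m) := by
      rw [hAeq, show (-(r * S)) ^ 2 = (r * S) ^ 2 by ring, hrS2]
    nlinarith [hCS]
  -- sum of squares forces the closed form
  have hT : ∑ i, (S * (w i - 1) + r * e i) ^ 2 = 0 := by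
    have hexp : ∀ i ∈ (univ : Finset (Fin m)), (S * (w i - 1) + r * e i) ^ 2
        = S ^ 2 * (w i - 1) ^ 2 + 2 * S * r * (e i * (w i - 1)) + r ^ 2 * e i ^ 2 := by
      intro i _; ring
    rw [Finset.sum_congr rfl hexp, Finset.sum_add_distrib, Finset.sum_add_distrib,
      ← Finset.mul_sum, ← Finset.mul_sum, ← Finset.mul_sum, hQeq, ← hAdef, hAeq,
      ← hS2, hSsq, hrsq]
    have h5 : S * r * (r * S) = S2 * (ρ * ↑m) := by rw [← hrsq, ← hSsq]; ring
    linear_combination (-2 : ℝ) * h5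
  have hform : ∀ i, w i = 1 - r * e i / S := by
    intro i
    have hz : (S * (w i - 1) + r * e i) ^ 2 = 0 := by
      have := (Finset.sum_eq_zero_iff_of_nonneg
        (fun k (_ : k ∈ (univ : Finset (Fin m))) => sq_nonneg (S * (w k - 1) + r * e k))).mp hT
      exact this i (mem_univ i)
    have hz2 : S * (w i - 1) + r * e i = 0 := by
      exact pow_eq_zero_iff (n := 2) (by norm_num) |>.mp hz
    have hgoal : w i * S = (1 - r * e i / S) * S := by
      have hc : (1 - r * e i / S) * S = S - r * e i := by
        rw [sub_mul, one_mul, div_mul_eq_mul_div, mul_div_assoc, div_self hSpos.ne', mul_one]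
      rw [hc]; nlinarith [hz2]
    exact mul_right_cancel₀ hSpos.ne' hgoal
  constructor
  · intro i
    have := hform i
    simpa [he, hdb, hS, hS2, hr] using this
  · intro i j hij
    rw [hform i, hform j]
    have hee : e i < e j := by simp only [he]; linarith
    have : r * e i / S < r * e j / S := by
      apply div_lt_div_of_pos_right ?_ hSpos
      exact (mul_lt_mul_iff_right₀ hrpos).mpr hee
    linarith
end
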